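/- Let G ∈ ℂ^{m×n} with m < n satisfy G^# Gᵀ = G G* and suppose [G^# G] has full row rank m. Then there exists H ∈ ℂ^{(n−m)×n} such that the stacked matrix W = [G; H] ∈ ℂ^{n×n} satisfies W^# Wᵀ = W W* and [W^# W] has full row rank n. -/

import Mathlib

set_option maxHeartbeats 1000000
set_option synthInstance.maxHeartbeats 1000000

open Matrix

namespace SymplecticAux

open Module Submodule

private lemma ofReal_mul_im' (r : ℝ) (z : ℂ) : ((r : ℂ) * z).im = r * z.im := by
  simp [Complex.mul_im]

/-- The standard symplectic form on `Fin n → ℂ` viewed as a real vector space: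
`ω u v = Im ⟨u, v⟩`. -/
noncomputable def om (n : ℕ) : LinearMap.BilinForm ℝ (Fin n → ℂ) :=
  LinearMap.mk₂ ℝ (fun u v => (∑ k, (starRingEnd ℂ) (u k) * v k).im)
    (fun u u' v => by simp [add_mul, Finset.sum_add_distrib])
    (fun r u v => by
      have hk : ∀ k : Fin n, (starRingEnd ℂ) ((r • u) k) * v k =
          (r : ℂ) * ((starRingEnd ℂ) (u k) * v k) := by
        intro k
        rw [Pi.smul_apply, Complex.real_smul, _root_.map_mul, Complex.conj_ofReal, mul_assoc]
      show (∑ k : Fin n, (starRingEnd ℂ) ((r • u) k) * v k).im =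
        r • (∑ k : Fin n, (starRingEnd ℂ) (u k) * v k).im
      rw [Finset.sum_congr rfl fun k _ => hk k, ← Finset.mul_sum, ofReal_mul_im', smul_eq_mul])
    (fun u v v' => by simp [mul_add, Finset.sum_add_distrib])
    (fun r u v => by
      have hk : ∀ k : Fin n, (starRingEnd ℂ) (u k) * ((r • v) k) =
          (r : ℂ) * ((starRingEnd ℂ) (u k) * v k) := by
        intro k
        rw [Pi.smul_apply, Complex.real_smul]; ring
      show (∑ k : Fin n, (starRingEnd ℂ) (u k) * ((r • v) k)).im =
        r • (∑ k : Fin n, (starRingEnd ℂ) (u k) * v k).im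
      rw [Finset.sum_congr rfl fun k _ => hk k, ← Finset.mul_sum, ofReal_mul_im', smul_eq_mul])

lemma om_apply {n : ℕ} (u v : Fin n → ℂ) :
    om n u v = (∑ k, (starRingEnd ℂ) (u k) * v k).im := rfl

lemma om_isAlt (n : ℕ) : (om n).IsAlt := by
  intro u
  rw [om_apply, Complex.im_sum]
  refine Finset.sum_eq_zero fun k _ => ?_
  rw [mul_comm, Complex.mul_conj]
  simp

lemma om_nondeg (n : ℕ) : (om n).Nondegenerate := by
  suffices hSL : LinearMap.SeparatingLeft (om n) from
    ⟨hSL, fun v hv => hSL v fun u => (om_isAlt n).isRefl u v (hv u)⟩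
  intro u hu
  have h := hu (fun k => Complex.I * u k)
  rw [om_apply, Complex.im_sum] at h
  have hterm : ∀ k, ((starRingEnd ℂ) (u k) * (Complex.I * u k)).im = Complex.normSq (u k) := by
    intro k
    rw [show (starRingEnd ℂ) (u k) * (Complex.I * u k) = (u k * (starRingEnd ℂ) (u k)) * Complex.I
        from by ring, Complex.mul_conj, Complex.mul_I_im]
    simp
  rw [Finset.sum_congr rfl (fun k _ => hterm k)] at h
  funext k
  have hk : Complex.normSq (u k) = 0 := by
    have hnn : ∀ j ∈ Finset.univ, (0:ℝ) ≤ Complex.normSq (u j) := fun j _ => Complex.normSq_nonneg _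
    exact (Finset.sum_eq_zero_iff_of_nonneg hnn).mp h k (Finset.mem_univ k)
  simpa using Complex.normSq_eq_zero.mp hk

section Extend

variable {K V : Type*} [Field K] [AddCommGroup V] [Module K V] [FiniteDimensional K V]

lemma iso_finrank_le {B : LinearMap.BilinForm K V} (hB : B.Nondegenerate) (halt : B.IsAlt)
    {N : ℕ} (hV : finrank K V = 2 * N) {L : Submodule K V}
    (hL : ∀ x ∈ L, ∀ y ∈ L, B x y = 0) : finrank K L ≤ N := by
  have hrefl := halt.isRefl
  have hle : L ≤ B.orthogonal L := fun v hv u hu => hL u hu v hv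
  have h1 := Submodule.finrank_mono hle
  have h2 := LinearMap.BilinForm.finrank_orthogonal hB L
  have h3 : finrank K L ≤ finrank K V := Submodule.finrank_le L
  omega

lemma extend_iso {B : LinearMap.BilinForm K V} (hB : B.Nondegenerate) (halt : B.IsAlt)
    {N : ℕ} (hV : finrank K V = 2 * N) :
    ∀ (d : ℕ) (L : Submodule K V), (∀ x ∈ L, ∀ y ∈ L, B x y = 0) → N - finrank K L ≤ d →
    ∃ M, L ≤ M ∧ (∀ x ∈ M, ∀ y ∈ M, B x y = 0) ∧ finrank K M = N := by
  intro d
  induction d with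
  | zero =>
    intro L hL hd
    exact ⟨L, le_rfl, hL, by have := iso_finrank_le hB halt hV hL; omega⟩
  | succ d ih =>
    intro L hL hd
    have hrefl := halt.isRefl
    have hLN := iso_finrank_le hB halt hV hL
    by_cases he : finrank K L = N
    · exact ⟨L, le_rfl, hL, he⟩
    · have hle : L ≤ B.orthogonal L := fun v hv u hu => hL u hu v hv
      have horth := LinearMap.BilinForm.finrank_orthogonal hB L
      obtain ⟨v, hvO, hvL⟩ : ∃ v ∈ B.orthogonal L, v ∉ L := by
        by_contra hcon
        push_neg at hcon
        have h' : B.orthogonal L ≤ L := hcon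
        have := Submodule.finrank_mono h'
        omega
      have hLL' : L ≤ L ⊔ K ∙ v := le_sup_left
      have hvL' : v ∈ L ⊔ K ∙ v :=
        Submodule.mem_sup_right (Submodule.mem_span_singleton_self v)
      have hL'iso : ∀ x ∈ L ⊔ K ∙ v, ∀ y ∈ L ⊔ K ∙ v, B x y = 0 := by
        intro x hx y hy
        obtain ⟨a, ha, x', hx', rfl⟩ := Submodule.mem_sup.mp hx
        obtain ⟨b, hb, y', hy', rfl⟩ := Submodule.mem_sup.mp hy
        obtain ⟨s, rfl⟩ := Submodule.mem_span_singleton.mp hx'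
        obtain ⟨t, rfl⟩ := Submodule.mem_span_singleton.mp hy'
        have h1 : B a b = 0 := hL a ha b hb
        have h2 : B a v = 0 := hvO a ha
        have h3 : B v b = 0 := hrefl b v (hvO b hb)
        have h4 : B v v = 0 := halt v
        simp [_root_.map_add, _root_.map_smul, h1, h2, h3, h4]
      have hlt : L < L ⊔ K ∙ v :=
        lt_of_le_of_ne hLL' (fun h => hvL (h ▸ hvL'))
      have hstrict : finrank K L < finrank K ↥(L ⊔ K ∙ v) :=
        Submodule.finrank_lt_finrank_of_lt hlt
      obtain ⟨M, hM1, hM2, hM3⟩ := ih (L ⊔ K ∙ v) hL'iso (by omega)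
      exact ⟨M, hLL'.trans hM1, hM2, hM3⟩

end Extend

lemma finrank_pi_complex (n : ℕ) : finrank ℝ (Fin n → ℂ) = 2 * n := by
  rw [Module.finrank_pi_fintype]
  simp [Complex.finrank_real_complex, mul_comm]


lemma complement_basis {K V : Type*} [Field K] [AddCommGroup V] [Module K V]
    [FiniteDimensional K V] {m r : ℕ} (g : Fin m → V) (hg : LinearIndependent K g)
    (M : Submodule K V) (hLM : Submodule.span K (Set.range g) ≤ M)
    (hMrank : finrank K M = m + r) :
    ∃ h : Fin r → V, LinearIndependent K (Sum.elim g h) ∧ ∀ j, h j ∈ M := by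
  classical
  obtain ⟨C, hC⟩ :=
    Submodule.exists_isCompl ((Submodule.span K (Set.range g)).comap M.subtype)
  have hLrank : finrank K (Submodule.span K (Set.range g)) = m := by
    rw [finrank_span_eq_card hg, Fintype.card_fin]
  have hLMrank : finrank K ((Submodule.span K (Set.range g)).comap M.subtype) = m :=
    (LinearEquiv.finrank_eq (Submodule.comapSubtypeEquivOfLe hLM)).trans hLrank
  have hsum := Submodule.finrank_add_eq_of_isCompl hC
  rw [hLMrank, hMrank] at hsum
  have hCrank : finrank K C = r := by omega
  set f : C →ₗ[K] V := M.subtype.comp C.subtype with hfdef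
  have hfinj : Function.Injective f :=
    (Submodule.injective_subtype M).comp (Submodule.injective_subtype C)
  let c : Basis (Fin r) K C := Module.finBasisOfFinrankEq K C hCrank
  refine ⟨fun j => f (c j), ?_, fun j => (C.subtype (c j)).2⟩
  have hLIh : LinearIndependent K (fun j => f (c j)) :=
    (c.linearIndependent).map' f (LinearMap.ker_eq_bot.mpr hfinj)
  refine hg.sum_type hLIh ?_
  have hspanh : Submodule.span K (Set.range fun j => f (c j)) = Submodule.map f ⊤ := by
    have hrc : (Set.range fun j => f (c j)) = ⇑f '' Set.range ⇑c := Set.range_comp ⇑f ⇑c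
    rw [hrc, Submodule.span_image, c.span_eq]
  have hmapf : Submodule.map f ⊤ = Submodule.map M.subtype (Submodule.map C.subtype ⊤) := by
    rw [hfdef, Submodule.map_comp]
  have hL' : Submodule.span K (Set.range g) =
      Submodule.map M.subtype ((Submodule.span K (Set.range g)).comap M.subtype) := by
    rw [Submodule.map_comap_subtype, inf_eq_right.mpr hLM]
  rw [hspanh, hmapf, hL']
  rw [show Submodule.map C.subtype ⊤ = C from by
    rw [Submodule.map_top, Submodule.range_subtype]]
  rw [disjoint_iff, ← Submodule.map_inf _ (Submodule.injective_subtype M), hC.inf_eq_bot,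
    Submodule.map_bot]

/-- Core extension lemma: a ℝ-linearly independent, pairwise ω-orthogonal family of `m`
vectors in `ℂⁿ` extends to such a family of `n` vectors. -/
lemma exists_extension {n m : ℕ} (hmn : m ≤ n) (g : Fin m → (Fin n → ℂ))
    (hg : LinearIndependent ℝ g)
    (hpair : ∀ i j, om n (g i) (g j) = 0) :
    ∃ h : Fin (n - m) → (Fin n → ℂ),
      LinearIndependent ℝ (Sum.elim g h) ∧
      ∀ p q, om n (Sum.elim g h p) (Sum.elim g h q) = 0 := by
  classical
  have hLiso : ∀ x ∈ Submodule.span ℝ (Set.range g), ∀ y ∈ Submodule.span ℝ (Set.range g),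
      om n x y = 0 := by
    intro x hx
    suffices h : Submodule.span ℝ (Set.range g) ≤ LinearMap.ker (om n x) by
      intro y hy; exact h hy
    rw [Submodule.span_le]
    rintro _ ⟨j, rfl⟩
    have hx' : Submodule.span ℝ (Set.range g) ≤ LinearMap.ker ((om n).flip (g j)) := by
      rw [Submodule.span_le]
      rintro _ ⟨i, rfl⟩
      simpa using hpair i j
    simpa using hx' hx
  obtain ⟨M, hLM, hMiso, hMrank⟩ :=
    extend_iso (om_nondeg n) (om_isAlt n) (finrank_pi_complex n) n
      (Submodule.span ℝ (Set.range g)) hLiso (by omega)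
  obtain ⟨h, hLI, hmemM⟩ := complement_basis (r := n - m) g hg M hLM (by rw [hMrank]; omega)
  refine ⟨h, hLI, ?_⟩
  have hmem : ∀ p, Sum.elim g h p ∈ M := by
    rintro (i | j)
    · exact hLM (Submodule.subset_span ⟨i, rfl⟩)
    · exact hmemM j
  intro p q
  exact hMiso _ (hmem p) _ (hmem q)

/-- The symplectic condition for a matrix in terms of its rows. -/
lemma cond_iff {n : ℕ} {ι : Type*} [Fintype ι] (W : Matrix ι (Fin n) ℂ) :
    W.map (starRingEnd ℂ) * Wᵀ = W * Wᴴ ↔ ∀ i j, om n (W i) (W j) = 0 := by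
  have hL : ∀ i j, (W.map (starRingEnd ℂ) * Wᵀ) i j =
      ∑ k, (starRingEnd ℂ) (W i k) * W j k := by
    intro i j; simp [Matrix.mul_apply, Matrix.map_apply, Matrix.transpose_apply]
  have hR : ∀ i j, (W * Wᴴ) i j =
      (starRingEnd ℂ) (∑ k, (starRingEnd ℂ) (W i k) * W j k) := by
    intro i j
    rw [map_sum]
    simp only [Matrix.mul_apply, Matrix.conjTranspose_apply, _root_.map_mul, Complex.conj_conj,
      Complex.star_def]
  constructor
  · intro h i j
    have h' := (Matrix.ext_iff.mpr h) i j
    rw [hL, hR] at h'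
    rw [om_apply]
    exact Complex.conj_eq_iff_im.mp h'.symm
  · intro h
    ext i j
    rw [hL, hR]
    exact (Complex.conj_eq_iff_im.mpr (h i j)).symm

/-- Full row rank of `[Ā A]` over ℂ is equivalent to ℝ-linear independence of the rows of A. -/
lemma rank_iff {n : ℕ} {ι : Type*} [Fintype ι] (A : Matrix ι (Fin n) ℂ) :
    (fromCols (A.map (starRingEnd ℂ)) A).rank = Fintype.card ι ↔
      LinearIndependent ℝ (fun i => A i) := by
  classical
  set F := fromCols (A.map (starRingEnd ℂ)) A with hFdef
  have hFrow : ∀ (i : ι) (x : Fin n ⊕ Fin n),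
      F i x = Sum.elim (fun k => (starRingEnd ℂ) (A i k)) (fun k => A i k) x := by
    intro i x
    cases x with
    | inl k => simp [hFdef, Matrix.fromCols_apply_inl, Matrix.map_apply]
    | inr k => simp [hFdef, Matrix.fromCols_apply_inr]
  have h1 : F.rank = Fintype.card ι ↔ LinearIndependent ℂ (fun i => F i) := by
    rw [Matrix.rank_eq_finrank_span_row, linearIndependent_iff_card_eq_finrank_span]
    rw [Set.finrank]
    exact eq_comm
  rw [h1]
  rw [Fintype.linearIndependent_iff, Fintype.linearIndependent_iff]
  constructor
  · -- ℂ-independence of F's rows implies ℝ-independence of A's rows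
    intro hF r hr i
    have h0 : ∑ j, (r j : ℂ) • F j = 0 := by
      funext x
      have hx : (∑ j, (r j : ℂ) • F j) x = ∑ j, (r j : ℂ) * F j x := by
        simp [Finset.sum_apply]
      cases x with
      | inl k =>
        rw [show (0 : (Fin n ⊕ Fin n) → ℂ) (Sum.inl k) = 0 from rfl, hx]
        have heach : ∀ j, (r j : ℂ) * F j (Sum.inl k) = (starRingEnd ℂ) ((r j : ℂ) * A j k) := by
          intro j; rw [hFrow]; simp [Complex.conj_ofReal]
        rw [Finset.sum_congr rfl fun j _ => heach j, ← map_sum]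
        have hk : ∑ j, (r j : ℂ) * A j k = 0 := by
          have hck := congr_fun hr k
          simpa [Finset.sum_apply, Complex.real_smul] using hck
        rw [hk]; simp
      | inr k =>
        rw [show (0 : (Fin n ⊕ Fin n) → ℂ) (Sum.inr k) = 0 from rfl, hx]
        have heach : ∀ j, (r j : ℂ) * F j (Sum.inr k) = (r j : ℂ) * A j k := by
          intro j; rw [hFrow]; simp
        rw [Finset.sum_congr rfl fun j _ => heach j]
        have hck := congr_fun hr k
        simpa [Finset.sum_apply, Complex.real_smul] using hck
    have := hF (fun j => (r j : ℂ)) h0 i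
    exact_mod_cast this
  · -- ℝ-independence of A's rows implies ℂ-independence of F's rows
    intro hA cc hcc i
    have h1' : ∀ k, ∑ j, cc j * A j k = 0 := by
      intro k
      have hck := congr_fun hcc (Sum.inr k)
      simpa [Finset.sum_apply, hFrow, smul_eq_mul] using hck
    have h2' : ∀ k, ∑ j, cc j * (starRingEnd ℂ) (A j k) = 0 := by
      intro k
      have hck := congr_fun hcc (Sum.inl k)
      simpa [Finset.sum_apply, hFrow, smul_eq_mul] using hck
    have h3' : ∀ k, ∑ j, (starRingEnd ℂ) (cc j) * A j k = 0 := by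
      intro k
      have hck := congrArg (starRingEnd ℂ) (h2' k)
      simpa [map_sum] using hck
    have hre : ∀ j, 2 * (cc j).re = 0 := by
      intro j
      refine hA (fun j => 2 * (cc j).re) (funext fun k => ?_) j
      rw [show (0 : Fin n → ℂ) k = 0 from rfl]
      have hx : (∑ j, (2 * (cc j).re) • A j) k = ∑ j, ((2 * (cc j).re : ℝ) : ℂ) * A j k := by
        simp [Finset.sum_apply, Complex.real_smul]
      rw [hx]
      have heach : ∀ j, ((2 * (cc j).re : ℝ) : ℂ) * A j k =
          cc j * A j k + (starRingEnd ℂ) (cc j) * A j k := by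
        intro j
        linear_combination A j k * (Complex.add_conj (cc j)).symm
      rw [Finset.sum_congr rfl fun j _ => heach j, Finset.sum_add_distrib, h1' k, h3' k, add_zero]
    have him : ∀ j, 2 * (cc j).im = 0 := by
      intro j
      refine hA (fun j => 2 * (cc j).im) (funext fun k => ?_) j
      rw [show (0 : Fin n → ℂ) k = 0 from rfl]
      have hx : (∑ j, (2 * (cc j).im) • A j) k = ∑ j, ((2 * (cc j).im : ℝ) : ℂ) * A j k := by
        simp [Finset.sum_apply, Complex.real_smul]
      rw [hx]
      have hImul : Complex.I * ∑ j, ((2 * (cc j).im : ℝ) : ℂ) * A j k = 0 := by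
        rw [Finset.mul_sum]
        have heach : ∀ j, Complex.I * (((2 * (cc j).im : ℝ) : ℂ) * A j k) =
            cc j * A j k - (starRingEnd ℂ) (cc j) * A j k := by
          intro j
          linear_combination A j k * (Complex.sub_conj (cc j)).symm
        rw [Finset.sum_congr rfl fun j _ => heach j, Finset.sum_sub_distrib, h1' k, h3' k,
          sub_zero]
      rcases mul_eq_zero.mp hImul with hz | hz
      · exact absurd hz Complex.I_ne_zero
      · exact hz
    have hrei : (cc i).re = 0 := by have := hre i; linarith
    have himi : (cc i).im = 0 := by have := him i; linarith
    exact Complex.ext (by simpa using hrei) (by simpa using himi)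

end SymplecticAux

open SymplecticAux

/-- Symplectic completion: if G ∈ ℂ^{m×n}, m < n, satisfies G^# Gᵀ = G G* and
[G^# G] has full row rank m, then there exists H ∈ ℂ^{(n−m)×n} such that
W = [G; H] satisfies W^# Wᵀ = W W* and [W^# W] has full row rank n. -/
theorem stmt_5 {m n : ℕ} (hmn : m < n) (G : Matrix (Fin m) (Fin n) ℂ)
    (hsymp : G.map (starRingEnd ℂ) * Gᵀ = G * Gᴴ)
    (hrank : (Matrix.fromCols (G.map (starRingEnd ℂ)) G).rank = m) :
    ∃ H : Matrix (Fin (n - m)) (Fin n) ℂ,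
      (Matrix.fromRows G H).map (starRingEnd ℂ) * (Matrix.fromRows G H)ᵀ =
        Matrix.fromRows G H * (Matrix.fromRows G H)ᴴ ∧
      (Matrix.fromCols ((Matrix.fromRows G H).map (starRingEnd ℂ))
        (Matrix.fromRows G H)).rank = n := by
  have hgLI : LinearIndependent ℝ (fun i => G i) := by
    refine (rank_iff G).mp ?_
    simpa using hrank
  have hgpair : ∀ i j, om n (G i) (G j) = 0 := (cond_iff G).mp hsymp
  obtain ⟨h, hLI, hpair⟩ := exists_extension hmn.le (fun i => G i) hgLI hgpair
  refine ⟨Matrix.of h, ?_, ?_⟩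
  · rw [cond_iff]
    have hrows : ∀ p, (Matrix.fromRows G (Matrix.of h)) p = Sum.elim (fun i => G i) h p := by
      rintro (i | j) <;> rfl
    intro p q
    rw [hrows p, hrows q]
    exact hpair p q
  · have hrows : (fun p => (Matrix.fromRows G (Matrix.of h)) p) = Sum.elim (fun i => G i) h := by
      funext p
      cases p <;> rfl
    have hr := (rank_iff (Matrix.fromRows G (Matrix.of h))).mpr (by rw [hrows]; exact hLI)
    rw [hr]
    simp
    omega
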